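/- Let P and Q be distinct planes in H^4 intersecting in a geodesic line L. Then H_P ∘ H_Q is a type-I elliptic isometry: its fixed-point set is exactly the plane τ orthogonal to the hyperplane spanned by P ∪ Q along L. -/

import Mathlib

set_option maxHeartbeats 1000000


/-- The Lorentz bilinear form of signature `(4,1)` on `ℝ⁵`. -/
noncomputable def lorentz (x y : Fin 5 → ℝ) : ℝ :=
  x 0 * y 0 + x 1 * y 1 + x 2 * y 2 + x 3 * y 3 - x 4 * y 4

/-- The hyperboloid model of hyperbolic 4-space `ℍ⁴`. -/
def H4 : Type := {x : Fin 5 → ℝ // lorentz x x = -1 ∧ 0 < x 4}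

/-- An isometry of `ℍ⁴`: a bijection preserving the restricted Lorentz form
(equivalently, the hyperbolic distance `cosh d(x,y) = -⟨x,y⟩_L`). -/
def IsIsom (f : H4 → H4) : Prop :=
  Function.Bijective f ∧ ∀ x y : H4, lorentz (f x).1 (f y).1 = lorentz x.1 y.1

/-- A (totally geodesic 2-dimensional) plane of `ℍ⁴`: the nonempty intersection of the
hyperboloid with a 3-dimensional (time-like) vector subspace. -/
def IsPlane (P : Set H4) : Prop :=
  ∃ V : Submodule ℝ (Fin 5 → ℝ), Module.finrank ℝ V = 3 ∧
    P = {x : H4 | x.1 ∈ V} ∧ P.Nonempty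

/-- The half-turn about the plane `P`: the (unique, orientation-preserving) isometric
involution of `ℍ⁴` whose fixed-point set is exactly `P`. -/
def IsHalfTurn (f : H4 → H4) (P : Set H4) : Prop :=
  IsIsom f ∧ f ∘ f = id ∧ {x : H4 | f x = x} = P

/-- The Lorentz-orthogonal complement of a subspace `S` of `ℝ^{4,1}`. -/
noncomputable def lorentzOrtho (S : Submodule ℝ (Fin 5 → ℝ)) :
    Submodule ℝ (Fin 5 → ℝ) where
  carrier := {v | ∀ w ∈ S, lorentz v w = 0}
  zero_mem' := by intro w _; simp [lorentz]
  add_mem' := by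
    intro a b ha hb w hw
    have h : lorentz (a + b) w = lorentz a w + lorentz b w := by
      simp only [lorentz, Pi.add_apply]; ring
    rw [h, ha w hw, hb w hw, add_zero]
  smul_mem' := by
    intro c a ha w hw
    have h : lorentz (c • a) w = c * lorentz a w := by
      simp only [lorentz, Pi.smul_apply, smul_eq_mul]; ring
    rw [h, ha w hw, mul_zero]

-- bilinearity lemmas
lemma lorentz_symm (x y : Fin 5 → ℝ) : lorentz x y = lorentz y x := by
  simp only [lorentz]; ring

lemma lorentz_add_left (x y z : Fin 5 → ℝ) :
    lorentz (x + y) z = lorentz x z + lorentz y z := by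
  simp only [lorentz, Pi.add_apply]; ring

lemma lorentz_sub_left (x y z : Fin 5 → ℝ) :
    lorentz (x - y) z = lorentz x z - lorentz y z := by
  simp only [lorentz, Pi.sub_apply]; ring

lemma lorentz_smul_left (c : ℝ) (x z : Fin 5 → ℝ) :
    lorentz (c • x) z = c * lorentz x z := by
  simp only [lorentz, Pi.smul_apply, smul_eq_mul]; ring

lemma lorentz_sub_right (x y z : Fin 5 → ℝ) :
    lorentz z (x - y) = lorentz z x - lorentz z y := by
  simp only [lorentz, Pi.sub_apply]; ring

lemma lorentz_add_right (x y z : Fin 5 → ℝ) :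
    lorentz z (x + y) = lorentz z x + lorentz z y := by
  simp only [lorentz, Pi.add_apply]; ring

lemma lorentz_smul_right (c : ℝ) (x z : Fin 5 → ℝ) :
    lorentz z (c • x) = c * lorentz z x := by
  simp only [lorentz, Pi.smul_apply, smul_eq_mul]; ring

-- w-coordinate at least 1
lemma H4.one_le (x : H4) : 1 ≤ x.1 4 := by
  have h := x.2.1
  have h2 := x.2.2
  simp only [lorentz] at h
  nlinarith [sq_nonneg (x.1 0), sq_nonneg (x.1 1), sq_nonneg (x.1 2), sq_nonneg (x.1 3)]

lemma aux_real (a0 a1 a2 a3 a4 u0 u1 u2 u3 u4 : ℝ)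
    (ha : a0 * a0 + a1 * a1 + a2 * a2 + a3 * a3 - a4 * a4 = -1)
    (ha4 : 1 ≤ a4)
    (hu : u0 * a0 + u1 * a1 + u2 * a2 + u3 * a3 - u4 * a4 = 0)
    (h0 : u0 * u0 + u1 * u1 + u2 * u2 + u3 * u3 - u4 * u4 ≤ 0) :
    u0 = 0 ∧ u1 = 0 ∧ u2 = 0 ∧ u3 = 0 ∧ u4 = 0 := by
  have hCS : (u0 * a0 + u1 * a1 + u2 * a2 + u3 * a3) ^ 2 ≤
      (u0 ^ 2 + u1 ^ 2 + u2 ^ 2 + u3 ^ 2) * (a0 ^ 2 + a1 ^ 2 + a2 ^ 2 + a3 ^ 2) := by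
    nlinarith [sq_nonneg (u0 * a1 - u1 * a0), sq_nonneg (u0 * a2 - u2 * a0),
      sq_nonneg (u0 * a3 - u3 * a0), sq_nonneg (u1 * a2 - u2 * a1),
      sq_nonneg (u1 * a3 - u3 * a1), sq_nonneg (u2 * a3 - u3 * a2)]
  have hS : u0 ^ 2 + u1 ^ 2 + u2 ^ 2 + u3 ^ 2 ≤ u4 ^ 2 := by nlinarith
  have hT : a0 ^ 2 + a1 ^ 2 + a2 ^ 2 + a3 ^ 2 = a4 ^ 2 - 1 := by nlinarith
  have hT0 : (0:ℝ) ≤ a4 ^ 2 - 1 := by nlinarith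
  have hmul : (u0 ^ 2 + u1 ^ 2 + u2 ^ 2 + u3 ^ 2) * (a4 ^ 2 - 1) ≤
      u4 ^ 2 * (a4 ^ 2 - 1) := mul_le_mul_of_nonneg_right hS hT0
  have hleft : (u4 * a4) ^ 2 = (u0 * a0 + u1 * a1 + u2 * a2 + u3 * a3) ^ 2 := by
    have h : u0 * a0 + u1 * a1 + u2 * a2 + u3 * a3 = u4 * a4 := by linarith
    rw [h]
  rw [hT] at hCS
  have h1 : (u4 * a4) ^ 2 ≤ u4 ^ 2 * (a4 ^ 2 - 1) := by rw [hleft]; exact hCS.trans hmul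
  have hu4sq : u4 ^ 2 ≤ 0 := by nlinarith [h1]
  have hu4 : u4 = 0 := by nlinarith [sq_nonneg u4]
  refine ⟨?_, ?_, ?_, ?_, hu4⟩ <;>
    nlinarith [sq_nonneg u0, sq_nonneg u1, sq_nonneg u2, sq_nonneg u3]

/-- orthogonal complement of a timelike H4 vector is positive definite -/
lemma eq_zero_of_ortho (v0 : H4) (u : Fin 5 → ℝ) (hu : lorentz u v0.1 = 0)
    (h0 : lorentz u u ≤ 0) : u = 0 := by
  have ha := v0.2.1
  have ha4 := H4.one_le v0
  simp only [lorentz] at ha hu h0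
  obtain ⟨e0, e1, e2, e3, e4⟩ :=
    aux_real (v0.1 0) (v0.1 1) (v0.1 2) (v0.1 3) (v0.1 4)
      (u 0) (u 1) (u 2) (u 3) (u 4) ha ha4 hu h0
  funext i
  fin_cases i <;> simp [e0, e1, e2, e3, e4]

lemma lorentz_self_nonneg_of_ortho (v0 : H4) (u : Fin 5 → ℝ) (hu : lorentz u v0.1 = 0) :
    0 ≤ lorentz u u := by
  by_contra h
  push_neg at h
  have := eq_zero_of_ortho v0 u hu h.le
  rw [this] at h
  simp [lorentz] at h

/-- constructing hyperboloid points in direction u from v0 -/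
lemma exists_point (v0 : H4) (u : Fin 5 → ℝ) (hu : lorentz u v0.1 = 0) :
    ∃ (ε : ℝ) (a : H4), 0 < ε ∧
      a.1 = Real.sqrt (1 + ε ^ 2 * lorentz u u) • v0.1 + ε • u := by
  have hq : 0 ≤ lorentz u u := lorentz_self_nonneg_of_ortho v0 u hu
  set q := lorentz u u with hqdef
  refine ⟨1 / (2 * (|u 4| + 1)), ?_, ?_, ?_⟩
  · have hd : 0 < 2 * (|u 4| + 1) := by positivity
    set ε := 1 / (2 * (|u 4| + 1)) with hε
    have hεpos : 0 < ε := by positivity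
    have h1q : (1:ℝ) ≤ 1 + ε ^ 2 * q := by nlinarith
    set s := Real.sqrt (1 + ε ^ 2 * q) with hs
    have hs1 : 1 ≤ s := by
      rw [hs]; exact Real.one_le_sqrt.2 h1q
    have hssq : s ^ 2 = 1 + ε ^ 2 * q := Real.sq_sqrt (by linarith)
    refine ⟨s • v0.1 + ε • u, ?_, ?_⟩
    · have hv := v0.2.1
      have expand : lorentz (s • v0.1 + ε • u) (s • v0.1 + ε • u)
          = s ^ 2 * lorentz v0.1 v0.1 + 2 * (s * ε) * lorentz u v0.1 + ε ^ 2 * q := by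
        simp only [lorentz, Pi.add_apply, Pi.smul_apply, smul_eq_mul, hqdef]; ring
      rw [expand, hv, hu]
      nlinarith
    · have h4 : (s • v0.1 + ε • u) 4 = s * v0.1 4 + ε * u 4 := by
        simp [Pi.add_apply]
      rw [h4]
      have hv4 : 1 ≤ v0.1 4 := H4.one_le v0
      have habs : ε * |u 4| ≤ 1 / 2 := by
        rw [hε, div_mul_eq_mul_div, one_mul, div_le_div_iff₀ hd (by norm_num)]
        nlinarith [abs_nonneg (u 4)]
      have h5 : -(1/2 : ℝ) ≤ ε * u 4 := by
        nlinarith [mul_le_mul_of_nonneg_left (neg_abs_le (u 4)) hεpos.le]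
      nlinarith
  · positivity
  · rfl

noncomputable def B5 : LinearMap.BilinForm ℝ (Fin 5 → ℝ) :=
  LinearMap.mk₂ ℝ lorentz lorentz_add_left
    (fun c x y => by rw [lorentz_smul_left]; rfl)
    (fun m n₁ n₂ => lorentz_add_right n₁ n₂ m)
    (fun c x y => by rw [lorentz_smul_right]; rfl)

lemma B5_apply (x y : Fin 5 → ℝ) : B5 x y = lorentz x y := rfl

lemma B5_refl : B5.IsRefl := by
  intro x y h
  rw [B5_apply, lorentz_symm] at h
  exact h

/-- decomposition into V-part and Lorentz-orthogonal part -/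
lemma decomp_exists (V : Submodule ℝ (Fin 5 → ℝ)) (v0 : H4) (hv0 : v0.1 ∈ V)
    (x : Fin 5 → ℝ) : ∃ p ∈ V, (∀ w ∈ V, lorentz (x - p) w = 0) := by
  have hnd : (B5.restrict V).Nondegenerate := by
    refine ⟨fun u hu => ?_, fun u hu => ?_⟩
    · have h1 : lorentz u.1 v0.1 = 0 := hu ⟨v0.1, hv0⟩
      have h2 : lorentz u.1 u.1 = 0 := hu u
      exact Subtype.ext (eq_zero_of_ortho v0 u.1 h1 h2.le)
    · have h1 : lorentz u.1 v0.1 = 0 := by rw [lorentz_symm]; exact hu ⟨v0.1, hv0⟩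
      have h2 : lorentz u.1 u.1 = 0 := hu u
      exact Subtype.ext (eq_zero_of_ortho v0 u.1 h1 h2.le)
  have hcompl : IsCompl V (B5.orthogonal V) :=
    LinearMap.BilinForm.isCompl_orthogonal_of_restrict_nondegenerate B5_refl hnd
  obtain ⟨p, nn, hpV, hnn, hpn⟩ :=
    Submodule.codisjoint_iff_exists_add_eq.mp hcompl.codisjoint x
  refine ⟨p, hpV, fun w hw => ?_⟩
  have hx : x - p = nn := by rw [← hpn]; abel
  rw [hx, lorentz_symm]
  exact (LinearMap.BilinForm.mem_orthogonal_iff.1 hnn) w hw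

/-- **Key lemma**: a half-turn about the plane cut out by `V` acts as the Lorentz
reflection in `V`. -/
lemma half_turn_key (V : Submodule ℝ (Fin 5 → ℝ)) (v0 : H4) (hv0 : v0.1 ∈ V)
    (f : H4 → H4) (hf : IsHalfTurn f {x : H4 | x.1 ∈ V}) (x : H4) :
    ((f x).1 + x.1 ∈ V) ∧ ∀ w ∈ V, lorentz ((f x).1 - x.1) w = 0 := by
  have hiso : ∀ y z : H4, lorentz (f y).1 (f z).1 = lorentz y.1 z.1 := hf.1.2
  have hfixset := hf.2.2
  have hfix : ∀ z : H4, z.1 ∈ V → f z = z := by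
    intro z hz
    have := Set.ext_iff.1 hfixset z
    exact this.2 hz
  have hfixrev : ∀ z : H4, f z = z → z.1 ∈ V := by
    intro z hz
    have := Set.ext_iff.1 hfixset z
    exact this.1 hz
  have hinv : ∀ z : H4, f (f z) = z := fun z => congrFun hf.2.1 z
  -- Step A : f y - y is Lorentz-orthogonal to V, for every y
  have stepA : ∀ y : H4, ∀ w ∈ V, lorentz ((f y).1 - y.1) w = 0 := by
    intro y
    have hq : ∀ z : H4, z.1 ∈ V → lorentz ((f y).1 - y.1) z.1 = 0 := by
      intro z hz
      have h1 : lorentz (f y).1 (f z).1 = lorentz y.1 z.1 := hiso y z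
      rw [hfix z hz] at h1
      rw [lorentz_sub_left, h1, sub_self]
    intro w hw
    set c := lorentz w v0.1 with hc
    have huV : w + c • v0.1 ∈ V := V.add_mem hw (V.smul_mem _ hv0)
    have huo : lorentz (w + c • v0.1) v0.1 = 0 := by
      rw [lorentz_add_left, lorentz_smul_left, v0.2.1]; ring
    obtain ⟨ε, a, hε, ha⟩ := exists_point v0 _ huo
    have haV : a.1 ∈ V := by
      rw [ha]; exact V.add_mem (V.smul_mem _ hv0) (V.smul_mem _ huV)
    have h2 := hq a haV
    have h3 := hq v0 hv0
    have key : lorentz ((f y).1 - y.1) a.1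
        = Real.sqrt (1 + ε ^ 2 * lorentz (w + c • v0.1) (w + c • v0.1)) *
            lorentz ((f y).1 - y.1) v0.1
          + ε * (lorentz ((f y).1 - y.1) w + c * lorentz ((f y).1 - y.1) v0.1) := by
      rw [ha, lorentz_add_right, lorentz_smul_right, lorentz_add_right,
        lorentz_smul_right, lorentz_smul_right, lorentz_add_right, lorentz_smul_right]
    rw [h2, h3] at key
    have h5 : ε * lorentz ((f y).1 - y.1) w = 0 := by linear_combination -key
    exact (mul_eq_zero.1 h5).resolve_left (ne_of_gt hε)
  refine ⟨?_, stepA x⟩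
  -- decomposition of x
  obtain ⟨p, hpV, hnO⟩ := decomp_exists V v0 hv0 x.1
  -- the f-image also has V-component p
  have hmO : ∀ w ∈ V, lorentz ((f x).1 - p) w = 0 := by
    intro w hw
    have hrw : (f x).1 - p = ((f x).1 - x.1) + (x.1 - p) := by abel
    rw [hrw, lorentz_add_left, stepA x w hw, hnO w hw, add_zero]
  -- bilinear expansion helper
  have expand : ∀ (p1 p2 u1 u2 : Fin 5 → ℝ), p1 ∈ V → p2 ∈ V →
      (∀ w ∈ V, lorentz u1 w = 0) → (∀ w ∈ V, lorentz u2 w = 0) →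
      lorentz (p1 + u1) (p2 + u2) = lorentz p1 p2 + lorentz u1 u2 := by
    intro p1 p2 u1 u2 hp1 hp2 hu1 hu2
    rw [lorentz_add_left, lorentz_add_right, lorentz_add_right]
    have h12 : lorentz u1 p2 = 0 := hu1 p2 hp2
    have h21 : lorentz p1 u2 = 0 := by rw [lorentz_symm]; exact hu2 p1 hp1
    rw [h12, h21]; ring
  -- F1 : the isometry relation in terms of orthogonal components
  have F1 : ∀ (y z : H4) (py pz : Fin 5 → ℝ), py ∈ V → pz ∈ V →
      (∀ w ∈ V, lorentz (y.1 - py) w = 0) → (∀ w ∈ V, lorentz (z.1 - pz) w = 0) →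
      (∀ w ∈ V, lorentz ((f y).1 - py) w = 0) → (∀ w ∈ V, lorentz ((f z).1 - pz) w = 0) →
      lorentz ((f y).1 - py) ((f z).1 - pz) = lorentz (y.1 - py) (z.1 - pz) := by
    intro y z py pz hpy hpz h1 h2 h3 h4
    have e1 : lorentz (f y).1 (f z).1
        = lorentz py pz + lorentz ((f y).1 - py) ((f z).1 - pz) := by
      have hy : (f y).1 = py + ((f y).1 - py) := by abel
      have hz : (f z).1 = pz + ((f z).1 - pz) := by abel
      calc lorentz (f y).1 (f z).1
          = lorentz (py + ((f y).1 - py)) (pz + ((f z).1 - pz)) := by rw [← hy, ← hz]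
        _ = lorentz py pz + lorentz ((f y).1 - py) ((f z).1 - pz) :=
            expand _ _ _ _ hpy hpz h3 h4
    have e2 : lorentz y.1 z.1
        = lorentz py pz + lorentz (y.1 - py) (z.1 - pz) := by
      have hy : y.1 = py + (y.1 - py) := by abel
      have hz : z.1 = pz + (z.1 - pz) := by abel
      calc lorentz y.1 z.1
          = lorentz (py + (y.1 - py)) (pz + (z.1 - pz)) := by rw [← hy, ← hz]
        _ = lorentz py pz + lorentz (y.1 - py) (z.1 - pz) :=
            expand _ _ _ _ hpy hpz h1 h2
    have e3 := hiso y z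
    rw [e1, e2] at e3
    linarith
  -- auxiliary point in direction w0 = n + m
  set NX := x.1 - p with hNX
  set MX := (f x).1 - p with hMX
  set w0 := NX + MX with hw0def
  have hw0O : ∀ w ∈ V, lorentz w0 w = 0 := by
    intro w hw
    rw [hw0def, lorentz_add_left, hnO w hw, hmO w hw, add_zero]
  have hw0v0 : lorentz w0 v0.1 = 0 := hw0O v0.1 hv0
  obtain ⟨ε, a, hε, ha⟩ := exists_point v0 w0 hw0v0
  set s := Real.sqrt (1 + ε ^ 2 * lorentz w0 w0) with hs
  set pa := s • v0.1 with hpa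
  have hpaV : pa ∈ V := V.smul_mem _ hv0
  have hna : a.1 - pa = ε • w0 := by rw [ha, hpa]; abel
  have hnaO : ∀ w ∈ V, lorentz (a.1 - pa) w = 0 := by
    intro w hw
    rw [hna, lorentz_smul_left, hw0O w hw, mul_zero]
  have hfaO : ∀ w ∈ V, lorentz ((f a).1 - pa) w = 0 := by
    intro w hw
    have hrw : (f a).1 - pa = ((f a).1 - a.1) + (a.1 - pa) := by abel
    rw [hrw, lorentz_add_left, stepA a w hw, hnaO w hw, add_zero]
  set NA := a.1 - pa with hNA
  set MA := (f a).1 - pa with hMA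
  have I1 : lorentz MA MX = lorentz NA NX := F1 a x pa p hpaV hpV hnaO hnO hfaO hmO
  have I2 : lorentz MA NX = lorentz NA MX := by
    have hffx : ∀ w ∈ V, lorentz ((f (f x)).1 - p) w = 0 := by
      intro w hw; rw [hinv x]; exact hnO w hw
    have := F1 a (f x) pa p hpaV hpV hnaO hmO hfaO hffx
    rw [hinv x] at this
    exact this
  have I3 : lorentz MA MA = lorentz NA NA := F1 a a pa pa hpaV hpaV hnaO hnaO hfaO hfaO
  set q := lorentz w0 w0 with hq
  have hNAw0 : lorentz NA w0 = ε * q := by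
    rw [hna, lorentz_smul_left, ← hq]
  have hNANA : lorentz NA NA = ε * (ε * q) := by
    rw [hna, lorentz_smul_left, lorentz_smul_right, ← hq]
  have hMAw0 : lorentz MA w0 = ε * q := by
    have e1 := lorentz_add_right NX MX MA
    have e2 := lorentz_add_right NX MX NA
    rw [← hw0def] at e1 e2
    linarith [I1, I2, hNAw0, e1, e2]
  have hMANA : lorentz MA NA = ε * (ε * q) := by
    rw [hna, lorentz_smul_right, hMAw0]
  -- MA - NA is orthogonal to V and null, hence zero
  have hdiff : ∀ w ∈ V, lorentz (MA - NA) w = 0 := by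
    intro w hw
    rw [lorentz_sub_left, hfaO w hw, hnaO w hw, sub_self]
  have hnull : lorentz (MA - NA) (MA - NA) = 0 := by
    have d0 := lorentz_sub_left MA NA (MA - NA)
    have d1 := lorentz_sub_right MA NA MA
    have d2 := lorentz_sub_right MA NA NA
    have hsymm : lorentz NA MA = lorentz MA NA := lorentz_symm _ _
    linarith [d0, d1, d2, hsymm, I3, hMANA, hNANA]
  have hzero : MA - NA = 0 :=
    eq_zero_of_ortho v0 (MA - NA) (hdiff v0.1 hv0) hnull.le
  have hfa : f a = a := by
    apply Subtype.ext
    have : (f a).1 - a.1 = MA - NA := by rw [hMA, hNA]; abel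
    have h0 : (f a).1 - a.1 = 0 := by rw [this, hzero]
    exact sub_eq_zero.1 h0
  have haV : a.1 ∈ V := hfixrev a hfa
  have hNAV : NA ∈ V := by rw [hNA]; exact V.sub_mem haV hpaV
  have hNAzero : NA = 0 := by
    apply eq_zero_of_ortho v0 NA (hnaO v0.1 hv0)
    exact (hnaO NA hNAV).le
  have hw0zero : w0 = 0 := by
    have : ε • w0 = 0 := by rw [← hna, hNAzero]
    exact (smul_eq_zero.1 this).resolve_left (ne_of_gt hε)
  have hfinal : (f x).1 + x.1 - (p + p) = 0 := by
    rw [← hw0zero, hw0def, hNX, hMX]; abel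
  have : (f x).1 + x.1 = p + p := sub_eq_zero.1 hfinal
  rw [this]
  exact V.add_mem hpV hpV

lemma mem_lorentzOrtho {S : Submodule ℝ (Fin 5 → ℝ)} {v : Fin 5 → ℝ} :
    v ∈ lorentzOrtho S ↔ ∀ w ∈ S, lorentz v w = 0 := Iff.rfl

/-- If `P` and `Q` are distinct planes of `ℍ⁴` meeting in a geodesic line `L`
(so `V ⊓ W` is 2-dimensional and time-like), then `H_P ∘ H_Q` is a type-I elliptic isometry:
its fixed-point set is exactly the plane through `L` orthogonal to the hyperplane spanned by
`P ∪ Q`, namely the plane cut out by `(V ⊓ W) ⊔ (V ⊔ W)^⊥ᴸ`. -/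
theorem halfTurn_comp_along_line_typeI_elliptic
    (V W : Submodule ℝ (Fin 5 → ℝ))
    (hV : Module.finrank ℝ V = 3) (hW : Module.finrank ℝ W = 3) (hVW : V ≠ W)
    (P Q : Set H4) (hPV : P = {x : H4 | x.1 ∈ V}) (hQW : Q = {x : H4 | x.1 ∈ W})
    (hline : Module.finrank ℝ (V ⊓ W : Submodule ℝ (Fin 5 → ℝ)) = 2)
    (hLne : ∃ x : H4, x.1 ∈ V ⊓ W)
    (f g : H4 → H4) (hf : IsHalfTurn f P) (hg : IsHalfTurn g Q) :
    {x : H4 | f (g x) = x} = {x : H4 | x.1 ∈ (V ⊓ W) ⊔ lorentzOrtho (V ⊔ W)} := by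
  obtain ⟨v0, hv0⟩ := hLne
  have hv0V : v0.1 ∈ V := hv0.1
  have hv0W : v0.1 ∈ W := hv0.2
  rw [hPV] at hf
  rw [hQW] at hg
  have keyf := half_turn_key V v0 hv0V f hf
  have keyg := half_turn_key W v0 hv0W g hg
  ext x
  simp only [Set.mem_setOf_eq]
  constructor
  · intro h
    have hsV : x.1 + (g x).1 ∈ V := by
      have h1 := (keyf (g x)).1
      rw [h] at h1
      exact h1
    have hsW : x.1 + (g x).1 ∈ W := by
      have h1 := (keyg x).1
      rw [add_comm] at h1
      exact h1
    have hdW : ∀ w ∈ W, lorentz ((g x).1 - x.1) w = 0 := (keyg x).2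
    have hdV : ∀ w ∈ V, lorentz ((g x).1 - x.1) w = 0 := by
      intro w hw
      have h2 := (keyf (g x)).2 w hw
      rw [h] at h2
      have e : lorentz ((g x).1 - x.1) w = - lorentz (x.1 - (g x).1) w := by
        rw [lorentz_sub_left, lorentz_sub_left]; ring
      rw [e, h2, neg_zero]
    refine Submodule.mem_sup.2 ⟨(2⁻¹ : ℝ) • (x.1 + (g x).1), ?_,
      (-(2⁻¹ : ℝ)) • ((g x).1 - x.1), ?_, ?_⟩
    · exact Submodule.mem_inf.2 ⟨Submodule.smul_mem _ _ hsV, Submodule.smul_mem _ _ hsW⟩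
    · apply Submodule.smul_mem
      rw [mem_lorentzOrtho]
      intro w hw
      obtain ⟨w1, hw1, w2, hw2, hw12⟩ := Submodule.mem_sup.1 hw
      rw [← hw12, lorentz_add_right, hdV w1 hw1, hdW w2 hw2, add_zero]
    · module
  · intro hx
    obtain ⟨a, ha, b, hb, hab⟩ := Submodule.mem_sup.1 hx
    have haV : a ∈ V := ha.1
    have haW : a ∈ W := ha.2
    have hbV : ∀ w ∈ V, lorentz b w = 0 := fun w hw =>
      (mem_lorentzOrtho.1 hb) w (Submodule.mem_sup_left hw)
    have hbW : ∀ w ∈ W, lorentz b w = 0 := fun w hw =>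
      (mem_lorentzOrtho.1 hb) w (Submodule.mem_sup_right hw)
    have uniq : ∀ (U : Submodule ℝ (Fin 5 → ℝ)), v0.1 ∈ U → ∀ u, u ∈ U →
        (∀ w ∈ U, lorentz u w = 0) → u = 0 := by
      intro U hU u hu hO
      exact eq_zero_of_ortho v0 u (hO v0.1 hU) (le_of_eq (hO u hu))
    have hg1 : (g x).1 = a - b := by
      have huW : (g x).1 - (a - b) ∈ W := by
        have h1 : (g x).1 + x.1 ∈ W := (keyg x).1
        have e : (g x).1 - (a - b) = ((g x).1 + x.1) - (a + a) := by
          rw [← hab]; abel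
        rw [e]
        exact W.sub_mem h1 (W.add_mem haW haW)
      have huO : ∀ w ∈ W, lorentz ((g x).1 - (a - b)) w = 0 := by
        intro w hw
        have h1 := (keyg x).2 w hw
        have h2 := hbW w hw
        have e : (g x).1 - (a - b) = ((g x).1 - x.1) + (b + b) := by
          rw [← hab]; abel
        rw [e, lorentz_add_left, lorentz_add_left, h1, h2, add_zero, add_zero]
      have h0 := uniq W hv0W _ huW huO
      exact sub_eq_zero.1 h0
    have hf1 : (f (g x)).1 = x.1 := by
      have huV : (f (g x)).1 - (a + b) ∈ V := by
        have h1 : (f (g x)).1 + (g x).1 ∈ V := (keyf (g x)).1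
        have e : (f (g x)).1 - (a + b) = ((f (g x)).1 + (g x).1) - (a + a) := by
          rw [hg1]; abel
        rw [e]
        exact V.sub_mem h1 (V.add_mem haV haV)
      have huO : ∀ w ∈ V, lorentz ((f (g x)).1 - (a + b)) w = 0 := by
        intro w hw
        have h1 := (keyf (g x)).2 w hw
        have h2 := hbV w hw
        have e : (f (g x)).1 - (a + b) = ((f (g x)).1 - (g x).1) - (b + b) := by
          rw [hg1]; abel
        rw [e, lorentz_sub_left, lorentz_add_left, h1, h2, add_zero, zero_sub, neg_zero]
      have h0 := uniq V hv0V _ huV huO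
      rw [sub_eq_zero.1 h0, hab]
    exact Subtype.ext hf1
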